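/- Rank, defect and Υ are constant on equivalence classes of symbols; for every symbol Λ one has rank(Λ) = |Υ(Λ)| + ⌊def(Λ)²/4⌋; and for every δ ∈ ℤ and m ∈ ℕ, the map Υ induces a bijection from the set of equivalence classes of symbols of defect δ and rank m + ⌊δ²/4⌋ onto the set of bipartitions of m. -/

import Mathlib

/-!
Symbols, rank, defect and the map Υ to bipartitions.

A symbol is an ordered pair of finite subsets of ℕ.  Two symbols are equivalent when the
equivalence relation generated by `d`-shifts identifies them.  `Υ` sends the symbol
`({a₁ > ⋯ > a_{m₁}}, {b₁ > ⋯ > b_{m₂}})` to the bipartition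
`((a₁−(m₁−1), …, a_{m₁}), (b₁−(m₂−1), …, b_{m₂}))`, encoded as the pair of multisets of
nonzero parts; note that the `i`-th largest element `a` of `A` contributes the part
`a − #{b ∈ A | b < a}`.

Statement 8: rank, defect and Υ are constant on equivalence classes; for every symbol,
`rank(Λ) = |Υ(Λ)| + ⌊def(Λ)²/4⌋`; and for every `δ ∈ ℤ`, `m ∈ ℕ`, the map `Υ` induces a
bijection from the set of equivalence classes of symbols of defect `δ` and rank
`m + ⌊δ²/4⌋` onto the set of bipartitions of `m`.
-/

open scoped Classical

noncomputable section

/-- A symbol: an ordered pair of finite subsets of ℕ. -/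
abbrev LSymbol := Finset ℕ × Finset ℕ

/-- The `d`-shift of a beta-set. -/
def shiftSet (d : ℕ) (A : Finset ℕ) : Finset ℕ :=
  Finset.range d ∪ A.image (· + d)

/-- The `d`-shift of a symbol. -/
def dShift (d : ℕ) (Λ : LSymbol) : LSymbol := (shiftSet d Λ.1, shiftSet d Λ.2)

/-- Equivalence of symbols: the equivalence relation generated by `d`-shifts. -/
def SymbolEquiv : LSymbol → LSymbol → Prop :=
  Relation.EqvGen fun Λ Λ' => ∃ d : ℕ, Λ' = dShift d Λ

/-- The rank of a symbol:
`rank(Λ) = Σ_{a∈A} a + Σ_{b∈B} b − ⌊((|A|+|B|−1)/2)²⌋`. -/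
def symbolRank (Λ : LSymbol) : ℤ :=
  ((∑ a ∈ Λ.1, a : ℕ) : ℤ) + ((∑ b ∈ Λ.2, b : ℕ) : ℤ) -
    ((Λ.1.card : ℤ) + (Λ.2.card : ℤ) - 1) ^ 2 / 4

/-- The defect of a symbol: `def(Λ) = |A| − |B|`. -/
def symbolDefect (Λ : LSymbol) : ℤ := (Λ.1.card : ℤ) - (Λ.2.card : ℤ)

/-- The partition associated to a beta-set `A = {a₁ > a₂ > ⋯ > a_m}`, namely
`(a₁−(m−1), a₂−(m−2), …, a_m)`, encoded as the multiset of its nonzero parts: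
the element `a ∈ A` contributes the part `a − #{b ∈ A | b < a}`. -/
def betaToPartition (A : Finset ℕ) : Multiset ℕ :=
  (A.val.map fun a => a - (A.filter fun b => b < a).card).filter (· ≠ 0)

/-- The map `Υ` from symbols to bipartitions. -/
def Upsilon (Λ : LSymbol) : Multiset ℕ × Multiset ℕ :=
  (betaToPartition Λ.1, betaToPartition Λ.2)

/-- The weight `|Υ(Λ)| = |μ¹| + |μ²|`. -/
def UpsilonSize (Λ : LSymbol) : ℕ := (Upsilon Λ).1.sum + (Upsilon Λ).2.sum

/-! ### Auxiliary development -/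

namespace SymbolAux

def partList : List ℕ → List ℕ
  | [] => []
  | a :: t => (a - t.length) :: partList t

def buildList : List ℕ → List ℕ
  | [] => []
  | a :: t => (a + t.length) :: buildList t

@[simp] lemma length_partList : ∀ l : List ℕ, (partList l).length = l.length
  | [] => rfl
  | _ :: t => by simp [partList, length_partList t]

@[simp] lemma length_buildList : ∀ l : List ℕ, (buildList l).length = l.length
  | [] => rfl
  | _ :: t => by simp [buildList, length_buildList t]

lemma tail_length_le : ∀ {a : ℕ} {t : List ℕ}, (a :: t).Pairwise (· > ·) → t.length ≤ a
  | _, [], _ => Nat.zero_le _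
  | a, b :: t, h => by
    rcases List.pairwise_cons.mp h with ⟨h1, h2⟩
    have hb := tail_length_le h2
    have hab : a > b := h1 b List.mem_cons_self
    simp only [List.length_cons]
    omega

lemma partList_buildList : ∀ l : List ℕ, partList (buildList l) = l
  | [] => rfl
  | a :: t => by
    simp [buildList, partList, length_buildList, partList_buildList t]

lemma buildList_partList : ∀ l : List ℕ, l.Pairwise (· > ·) → buildList (partList l) = l
  | [], _ => rfl
  | a :: t, h => by
    have hlen := tail_length_le h
    simp only [partList, buildList, length_partList,
      buildList_partList t (List.pairwise_cons.mp h).2]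
    congr 1
    omega

lemma buildList_chain' : ∀ l : List ℕ, l.Pairwise (· ≥ ·) → List.Chain' (· > ·) (buildList l)
  | [], _ => List.isChain_nil
  | [_], _ => by simp [buildList]; exact List.isChain_singleton _
  | a :: b :: t, h => by
    rcases List.pairwise_cons.mp h with ⟨h1, h2⟩
    have hab : a ≥ b := h1 b (by simp)
    have ih := buildList_chain' (b :: t) h2
    simp only [buildList] at ih ⊢
    refine List.IsChain.cons_cons ?_ ih
    simp only [List.length_cons]
    omega

lemma buildList_sorted (l : List ℕ) (h : l.Pairwise (· ≥ ·)) :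
    (buildList l).Pairwise (· > ·) :=
  List.isChain_iff_pairwise.mp (buildList_chain' l h)

lemma partList_chain' : ∀ l : List ℕ, l.Pairwise (· > ·) → List.Chain' (· ≥ ·) (partList l)
  | [], _ => List.isChain_nil
  | [_], _ => by simp [partList]; exact List.isChain_singleton _
  | a :: b :: t, h => by
    rcases List.pairwise_cons.mp h with ⟨h1, h2⟩
    have hab : a > b := h1 b (by simp)
    have hb := tail_length_le h2
    have ih := partList_chain' (b :: t) h2
    simp only [partList] at ih ⊢
    refine List.IsChain.cons_cons ?_ ih
    simp only [List.length_cons]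
    omega

lemma partList_sorted (l : List ℕ) (h : l.Pairwise (· > ·)) :
    (partList l).Pairwise (· ≥ ·) :=
  List.isChain_iff_pairwise.mp (partList_chain' l h)

lemma sum_partList : ∀ l : List ℕ, l.Pairwise (· > ·) →
    (partList l).sum * 2 + l.length * l.length = l.sum * 2 + l.length
  | [], _ => rfl
  | a :: t, h => by
    have hlen := tail_length_le h
    have ih := sum_partList t (List.pairwise_cons.mp h).2
    have hk : (t.length + 1) * (t.length + 1) = t.length * t.length + 2 * t.length + 1 := by
      ring
    simp only [partList, List.sum_cons, List.length_cons]
    generalize hQ : (t.length + 1) * (t.length + 1) = Q at hk ⊢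
    generalize hP : t.length * t.length = P at ih hk
    omega


def descList (A : Finset ℕ) : List ℕ := (A.sort (· ≤ ·)).reverse

lemma descList_sorted (A : Finset ℕ) : (descList A).Pairwise (· > ·) :=
  List.pairwise_reverse.mpr (((A.pairwise_sort (· ≤ ·)).and (A.sort_nodup (· ≤ ·))).imp
    fun h => lt_of_le_of_ne h.1 h.2)

lemma descList_coe (A : Finset ℕ) : ((descList A : List ℕ) : Multiset ℕ) = A.val := by
  rw [descList, Multiset.coe_reverse, Finset.sort_eq]

lemma descList_length (A : Finset ℕ) : (descList A).length = A.card := by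
  rw [descList, List.length_reverse, Finset.length_sort]

lemma descList_unique {A : Finset ℕ} {l : List ℕ} (hs : l.Pairwise (· > ·))
    (hl : (l : Multiset ℕ) = A.val) : descList A = l := by
  haveI : Std.Antisymm (α := ℕ) (· > ·) := ⟨fun a b h1 h2 => absurd h2 (lt_asymm h1)⟩
  exact List.Perm.eq_of_pairwise' (descList_sorted A) hs
    (Multiset.coe_eq_coe.mp (by rw [descList_coe, hl]))

def betaFull (A : Finset ℕ) : Multiset ℕ :=
  A.val.map fun a => a - (A.filter fun b => b < a).card

lemma betaToPartition_eq (A : Finset ℕ) :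
    betaToPartition A = (betaFull A).filter (· ≠ 0) := rfl

lemma betaFull_eq_aux : ∀ (n : ℕ) (A : Finset ℕ), A.card = n →
    betaFull A = ↑(partList (descList A)) := by
  intro n
  induction n with
  | zero =>
    intro A hA
    have : A = ∅ := Finset.card_eq_zero.mp hA
    subst this
    have : descList (∅ : Finset ℕ) = [] := descList_unique (by simp) (by simp)
    rw [this]
    rfl
  | succ n ih =>
    intro A hA
    have hne : A.Nonempty := Finset.card_pos.mp (by omega)
    set a := A.max' hne with ha
    set A' := A.erase a with hA'
    have hmem : a ∈ A := A.max'_mem hne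
    have hcard' : A'.card = n := by
      rw [hA', Finset.card_erase_of_mem hmem, hA]; omega
    have hlt : ∀ x ∈ A', x < a := fun x hx =>
      lt_of_le_of_ne (A.le_max' x (Finset.mem_of_mem_erase hx)) (Finset.ne_of_mem_erase hx)
    have hdesc : descList A = a :: descList A' := by
      apply descList_unique
      · rw [List.pairwise_cons]
        refine ⟨fun b hb => ?_, descList_sorted A'⟩
        have : b ∈ A'.val := by rw [← descList_coe A']; exact hb
        exact hlt b this
      · show (a ::ₘ (descList A' : Multiset ℕ)) = A.val
        rw [descList_coe, hA', Finset.erase_val, Multiset.cons_erase (by exact hmem)]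
    have hval : A.val = a ::ₘ A'.val := by
      rw [hA', Finset.erase_val, Multiset.cons_erase (by exact hmem)]
    have hfa : A.filter (fun b => b < a) = A' := by
      ext x
      simp only [Finset.mem_filter, hA', Finset.mem_erase]
      constructor
      · rintro ⟨h1, h2⟩; exact ⟨ne_of_lt h2, h1⟩
      · rintro ⟨h1, h2⟩; exact ⟨h2, hlt x (by rw [hA']; exact Finset.mem_erase.mpr ⟨h1, h2⟩)⟩
    have hfx : ∀ x ∈ A', A.filter (fun b => b < x) = A'.filter (fun b => b < x) := by
      intro x hx
      ext y
      simp only [Finset.mem_filter, hA', Finset.mem_erase]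
      constructor
      · rintro ⟨h1, h2⟩
        exact ⟨⟨ne_of_lt (lt_trans h2 (hlt x hx)), h1⟩, h2⟩
      · rintro ⟨⟨_, h1⟩, h2⟩; exact ⟨h1, h2⟩
    have hmap : betaFull A = (a - n) ::ₘ betaFull A' := by
      rw [betaFull, hval, Multiset.map_cons]
      congr 1
      · rw [hfa, hcard']
      · exact Multiset.map_congr rfl fun x hx => by
          rw [hfx x (Finset.mem_def.mpr hx)]
    rw [hmap, ih A' hcard', hdesc]
    show _ = ((((a - (descList A').length) :: partList (descList A')) : List ℕ) : Multiset ℕ)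
    rw [descList_length, hcard']
    rfl

lemma betaFull_eq (A : Finset ℕ) : betaFull A = ↑(partList (descList A)) :=
  betaFull_eq_aux A.card A rfl


lemma betaFull_card (A : Finset ℕ) : Multiset.card (betaFull A) = A.card := by
  simp [betaFull]

lemma betaFull_decomp (A : Finset ℕ) :
    betaFull A = betaToPartition A +
      Multiset.replicate (A.card - Multiset.card (betaToPartition A)) 0 := by
  have h1 := Multiset.filter_add_not (fun x => x ≠ 0) (betaFull A)
  have hcards : Multiset.card (Multiset.filter (fun x => x ≠ 0) (betaFull A)) +
      Multiset.card (Multiset.filter (fun x => ¬ x ≠ 0) (betaFull A)) = A.card := by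
    rw [← Multiset.card_add, h1, betaFull_card]
  have h2 : Multiset.filter (fun x => ¬ x ≠ 0) (betaFull A) =
      Multiset.replicate (A.card - Multiset.card (betaToPartition A)) 0 := by
    rw [Multiset.eq_replicate]
    constructor
    · rw [betaToPartition_eq]
      show Multiset.card (Multiset.filter (fun x => ¬ x ≠ 0) (betaFull A)) = _
      omega
    · intro b hb
      have := Multiset.of_mem_filter hb
      simpa using this
  conv_lhs => rw [← h1]
  rw [h2]
  rw [betaToPartition_eq]

lemma betaFull_inj {A B : Finset ℕ} (h : betaFull A = betaFull B) : A = B := by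
  have hcoe : ((partList (descList A) : List ℕ) : Multiset ℕ) = ↑(partList (descList B)) := by
    rw [← betaFull_eq, ← betaFull_eq, h]
  haveI : Std.Antisymm (α := ℕ) (· ≥ ·) := ⟨fun a b h1 h2 => le_antisymm h2 h1⟩
  have hl : partList (descList A) = partList (descList B) :=
    List.Perm.eq_of_pairwise'
      (partList_sorted _ (descList_sorted A)) (partList_sorted _ (descList_sorted B))
      (Multiset.coe_eq_coe.mp hcoe)
  have hd : descList A = descList B := by
    rw [← buildList_partList _ (descList_sorted A), hl,
      buildList_partList _ (descList_sorted B)]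
  have : A.val = B.val := by rw [← descList_coe A, ← descList_coe B, hd]
  exact Finset.val_inj.mp this

lemma beta_inj {A B : Finset ℕ} (hc : A.card = B.card)
    (hp : betaToPartition A = betaToPartition B) : A = B :=
  betaFull_inj (by rw [betaFull_decomp, betaFull_decomp, hp, hc])

/-! ### Shifts -/

lemma shift_disjoint (d : ℕ) (A : Finset ℕ) :
    Disjoint (Finset.range d) (A.image (· + d)) := by
  rw [Finset.disjoint_left]
  intro x hx hx'
  rw [Finset.mem_range] at hx
  obtain ⟨a, _, rfl⟩ := Finset.mem_image.mp hx'
  omega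

lemma shiftSet_val (d : ℕ) (A : Finset ℕ) :
    (shiftSet d A).val = (Multiset.range d) + A.val.map (· + d) := by
  have h : shiftSet d A = (Finset.range d).disjUnion (A.image (· + d)) (shift_disjoint d A) :=
    (Finset.disjUnion_eq_union _ _ _).symm
  rw [h]
  show (Finset.range d).val + (A.image (· + d)).val = _
  rw [Finset.range_val]
  congr 1
  rw [Finset.image_val, Multiset.dedup_eq_self.mpr]
  exact A.nodup.map fun x y hxy => by omega

lemma card_shiftSet (d : ℕ) (A : Finset ℕ) : (shiftSet d A).card = d + A.card := by
  show Multiset.card (shiftSet d A).val = _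
  rw [shiftSet_val, Multiset.card_add, Multiset.card_range, Multiset.card_map]
  rfl

lemma descList_shift (d : ℕ) (A : Finset ℕ) :
    descList (shiftSet d A) = (descList A).map (· + d) ++ (List.range d).reverse := by
  apply descList_unique
  · rw [List.pairwise_append]
    refine ⟨?_, ?_, ?_⟩
    · exact List.pairwise_map.mpr ((descList_sorted A).imp fun h => by omega)
    · exact List.pairwise_reverse.mpr ((List.pairwise_lt_range (n := d)).imp fun h => h)
    · intro x hx y hy
      obtain ⟨a, _, rfl⟩ := List.mem_map.mp hx
      have : y < d := List.mem_range.mp (List.mem_reverse.mp hy)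
      omega
  · rw [← Multiset.coe_add, shiftSet_val, Multiset.coe_reverse]
    show _ + _ = _
    rw [add_comm]
    congr 1
    rw [← descList_coe A]
    exact (Multiset.map_coe _ _).symm

lemma partList_map_append (d : ℕ) (l₂ : List ℕ) (hd : l₂.length = d) :
    ∀ l : List ℕ, partList (l.map (· + d) ++ l₂) = partList l ++ partList l₂
  | [] => by simp [partList]
  | a :: t => by
    simp only [List.map_cons, List.cons_append, partList, List.append_eq,
      partList_map_append d l₂ hd t]
    congr 1
    simp only [List.append_eq, List.length_append, List.length_map, hd]
    omega

lemma partList_range_rev : ∀ d : ℕ, partList ((List.range d).reverse) = List.replicate d 0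
  | 0 => rfl
  | d + 1 => by
    rw [List.range_succ, List.reverse_append]
    show partList (d :: (List.range d).reverse) = _
    rw [partList, partList_range_rev d]
    simp [List.replicate_succ]

lemma betaFull_shift (d : ℕ) (A : Finset ℕ) :
    betaFull (shiftSet d A) = betaFull A + Multiset.replicate d 0 := by
  rw [betaFull_eq, descList_shift, partList_map_append d _ (by simp),
    partList_range_rev, ← Multiset.coe_add, betaFull_eq, Multiset.coe_replicate]

lemma betaToPartition_shift (d : ℕ) (A : Finset ℕ) :
    betaToPartition (shiftSet d A) = betaToPartition A := by
  rw [betaToPartition_eq, betaToPartition_eq, betaFull_shift, Multiset.filter_add]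
  have : Multiset.filter (· ≠ 0) (Multiset.replicate d 0) = 0 := by
    rw [Multiset.filter_eq_nil]
    intro a ha
    simpa using Multiset.eq_of_mem_replicate ha
  rw [this, add_zero]


/-! ### Rank identity -/

lemma sum_betaToPartition (A : Finset ℕ) :
    (betaToPartition A).sum * 2 + A.card * A.card = (∑ a ∈ A, a) * 2 + A.card := by
  have h1 : (betaToPartition A).sum = (betaFull A).sum := by
    conv_rhs => rw [← Multiset.filter_add_not (fun x => x ≠ 0) (betaFull A)]
    rw [Multiset.sum_add, betaToPartition_eq]
    have h0 : (Multiset.filter (fun x => ¬ x ≠ 0) (betaFull A)).sum = 0 := by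
      rw [Multiset.sum_eq_zero]
      intro x hx
      have := Multiset.of_mem_filter hx
      simpa using this
    rw [h0, add_zero]
  have h2 := sum_partList (descList A) (descList_sorted A)
  rw [descList_length] at h2
  have h3 : (descList A).sum = ∑ a ∈ A, a := by
    have : ((descList A : List ℕ) : Multiset ℕ).sum = A.val.sum := by
      rw [descList_coe]
    rw [Multiset.sum_coe] at this
    rw [this, Finset.sum_val]
    rfl
  have h4 : (betaFull A).sum = (partList (descList A)).sum := by
    rw [betaFull_eq, Multiset.sum_coe]
  omega

lemma sq_emod_four (n : ℤ) : n ^ 2 % 4 = 0 ∨ n ^ 2 % 4 = 1 := by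
  rcases Int.even_or_odd n with ⟨k, hk⟩ | ⟨k, hk⟩
  · left
    have h : n ^ 2 = 4 * (k * k) := by rw [hk]; ring
    rw [h]
    exact Int.mul_emod_right 4 _
  · right
    have h : n ^ 2 = 1 + 4 * (k * k + k) := by rw [hk]; ring
    rw [h, Int.add_mul_emod_self_left]
    decide

lemma rank_arith (sa sb s1 s2 u v P Q : ℤ)
    (h1 : u + v = 2 * P + 2 * Q + 1)
    (h2 : u % 4 = 0 ∨ u % 4 = 1) (h3 : v % 4 = 0 ∨ v % 4 = 1)
    (hP : P = 2 * sa - 2 * s1) (hQ : Q = 2 * sb - 2 * s2) :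
    sa + sb - u / 4 = s1 + s2 + v / 4 := by omega

lemma rank_eq (Λ : LSymbol) :
    symbolRank Λ = (UpsilonSize Λ : ℤ) + (symbolDefect Λ) ^ 2 / 4 := by
  obtain ⟨A, B⟩ := Λ
  have hA := sum_betaToPartition A
  have hB := sum_betaToPartition B
  have hA' : ((betaToPartition A).sum : ℤ) * 2 + (A.card : ℤ) * (A.card : ℤ)
      = ((∑ a ∈ A, a : ℕ) : ℤ) * 2 + (A.card : ℤ) := by exact_mod_cast hA
  have hB' : ((betaToPartition B).sum : ℤ) * 2 + (B.card : ℤ) * (B.card : ℤ)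
      = ((∑ a ∈ B, a : ℕ) : ℤ) * 2 + (B.card : ℤ) := by exact_mod_cast hB
  have hu := sq_emod_four ((A.card : ℤ) + (B.card : ℤ) - 1)
  have hv := sq_emod_four ((A.card : ℤ) - (B.card : ℤ))
  have h1 : ((A.card : ℤ) + (B.card : ℤ) - 1) ^ 2 + ((A.card : ℤ) - (B.card : ℤ)) ^ 2
      = 2 * ((A.card : ℤ) * (A.card : ℤ) - (A.card : ℤ))
        + 2 * ((B.card : ℤ) * (B.card : ℤ) - (B.card : ℤ)) + 1 := by ring
  show ((∑ a ∈ A, a : ℕ) : ℤ) + ((∑ b ∈ B, b : ℕ) : ℤ)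
      - ((A.card : ℤ) + (B.card : ℤ) - 1) ^ 2 / 4
      = ((((betaToPartition A).sum + (betaToPartition B).sum : ℕ)) : ℤ)
        + ((A.card : ℤ) - (B.card : ℤ)) ^ 2 / 4
  rw [Nat.cast_add]
  refine rank_arith _ _ _ _ _ _
    ((A.card : ℤ) * (A.card : ℤ) - (A.card : ℤ))
    ((B.card : ℤ) * (B.card : ℤ) - (B.card : ℤ)) h1 hu hv (by omega) (by omega)


/-! ### Building a symbol from a bipartition -/

def padded (p : Multiset ℕ) (n : ℕ) : List ℕ :=
  (p.sort (· ≤ ·)).reverse ++ List.replicate (n - Multiset.card p) 0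

lemma padded_sorted (p : Multiset ℕ) (n : ℕ) : (padded p n).Pairwise (· ≥ ·) := by
  rw [padded, List.pairwise_append]
  refine ⟨List.pairwise_reverse.mpr ((p.pairwise_sort (· ≤ ·)).imp fun h => h), ?_, ?_⟩
  · exact List.pairwise_replicate.mpr (Or.inr le_rfl)
  · intro a _ b hb
    rw [List.eq_of_mem_replicate hb]
    exact Nat.zero_le a

lemma padded_length (p : Multiset ℕ) (n : ℕ) (h : Multiset.card p ≤ n) :
    (padded p n).length = n := by
  rw [padded, List.length_append, List.length_reverse, Multiset.length_sort,
    List.length_replicate]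
  omega

lemma padded_coe (p : Multiset ℕ) (n : ℕ) :
    ((padded p n : List ℕ) : Multiset ℕ) = p + Multiset.replicate (n - Multiset.card p) 0 := by
  rw [padded, ← Multiset.coe_add, Multiset.coe_reverse, Multiset.sort_eq,
    Multiset.coe_replicate]

def buildFinset (p : Multiset ℕ) (n : ℕ) : Finset ℕ :=
  (buildList (padded p n)).toFinset

lemma buildFinset_val (p : Multiset ℕ) (n : ℕ) :
    (buildFinset p n).val = ↑(buildList (padded p n)) := by
  have hnd : (buildList (padded p n)).Nodup :=
    (buildList_sorted _ (padded_sorted p n)).imp fun h => ne_of_gt h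
  rw [buildFinset, List.toFinset, Multiset.toFinset_val, Multiset.dedup_eq_self.mpr]
  exact Multiset.coe_nodup.mpr hnd

lemma descList_buildFinset (p : Multiset ℕ) (n : ℕ) :
    descList (buildFinset p n) = buildList (padded p n) :=
  descList_unique (buildList_sorted _ (padded_sorted p n)) (buildFinset_val p n).symm

lemma card_buildFinset (p : Multiset ℕ) (n : ℕ) (h : Multiset.card p ≤ n) :
    (buildFinset p n).card = n := by
  show Multiset.card (buildFinset p n).val = n
  rw [buildFinset_val, Multiset.coe_card, length_buildList, padded_length p n h]

lemma betaToPartition_buildFinset (p : Multiset ℕ) (n : ℕ)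
    (hpos : ∀ x ∈ p, x ≠ 0) : betaToPartition (buildFinset p n) = p := by
  rw [betaToPartition_eq, betaFull_eq, descList_buildFinset, partList_buildList,
    padded_coe, Multiset.filter_add]
  have h1 : Multiset.filter (· ≠ 0) p = p := Multiset.filter_eq_self.mpr hpos
  have h2 : Multiset.filter (· ≠ 0) (Multiset.replicate (n - Multiset.card p) 0) = 0 := by
    rw [Multiset.filter_eq_nil]
    intro a ha
    simpa using Multiset.eq_of_mem_replicate ha
  rw [h1, h2, add_zero]

/-! ### Equivalence of symbols with the same defect and bipartition -/

lemma shift_eq (Λ Λ' : LSymbol) (hd : symbolDefect Λ = symbolDefect Λ')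
    (hU : Upsilon Λ = Upsilon Λ') (h : Λ.1.card ≤ Λ'.1.card) :
    Λ' = dShift (Λ'.1.card - Λ.1.card) Λ := by
  have hdd : ((Λ.1.card : ℤ) - Λ.2.card) = (Λ'.1.card : ℤ) - Λ'.2.card := hd
  have h21 : Λ.2.card ≤ Λ'.2.card := by omega
  have e1 : shiftSet (Λ'.1.card - Λ.1.card) Λ.1 = Λ'.1 := by
    apply beta_inj
    · rw [card_shiftSet]; omega
    · rw [betaToPartition_shift]
      exact congrArg Prod.fst hU
  have e2 : shiftSet (Λ'.1.card - Λ.1.card) Λ.2 = Λ'.2 := by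
    apply beta_inj
    · rw [card_shiftSet]; omega
    · rw [betaToPartition_shift]
      exact congrArg Prod.snd hU
  exact Prod.ext e1.symm e2.symm

lemma equiv_of_eq (Λ Λ' : LSymbol) (hd : symbolDefect Λ = symbolDefect Λ')
    (hU : Upsilon Λ = Upsilon Λ') : SymbolEquiv Λ Λ' := by
  rcases le_total Λ.1.card Λ'.1.card with h | h
  · exact Relation.EqvGen.rel _ _ ⟨_, shift_eq Λ Λ' hd hU h⟩
  · exact Relation.EqvGen.symm _ _ (Relation.EqvGen.rel _ _ ⟨_, shift_eq Λ' Λ hd.symm hU.symm h⟩)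

end SymbolAux

/-- Rank, defect and `Υ` are constant on equivalence classes of symbols;
`rank(Λ) = |Υ(Λ)| + ⌊def(Λ)²/4⌋`; and `Υ` induces a bijection from equivalence classes of
symbols of defect `δ` and rank `m + ⌊δ²/4⌋` onto the bipartitions of `m`. -/
theorem symbol_rank_defect_Upsilon :
    (∀ Λ Λ' : LSymbol, SymbolEquiv Λ Λ' →
      symbolRank Λ = symbolRank Λ' ∧ symbolDefect Λ = symbolDefect Λ' ∧
        Upsilon Λ = Upsilon Λ') ∧
    (∀ Λ : LSymbol, symbolRank Λ = (UpsilonSize Λ : ℤ) + (symbolDefect Λ) ^ 2 / 4) ∧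
    (∀ (δ : ℤ) (m : ℕ),
      (∀ p₁ p₂ : Multiset ℕ, (∀ x ∈ p₁, 0 < x) → (∀ x ∈ p₂, 0 < x) →
        p₁.sum + p₂.sum = m →
        ∃ Λ : LSymbol, symbolDefect Λ = δ ∧ symbolRank Λ = (m : ℤ) + δ ^ 2 / 4 ∧
          Upsilon Λ = (p₁, p₂)) ∧
      (∀ Λ Λ' : LSymbol, symbolDefect Λ = δ → symbolDefect Λ' = δ →
        symbolRank Λ = (m : ℤ) + δ ^ 2 / 4 → symbolRank Λ' = (m : ℤ) + δ ^ 2 / 4 →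
        Upsilon Λ = Upsilon Λ' → SymbolEquiv Λ Λ')) := by
  classical
  have hUs : ∀ (d : ℕ) (Λ : LSymbol), Upsilon (dShift d Λ) = Upsilon Λ := by
    intro d Λ
    simp only [Upsilon, dShift]
    rw [SymbolAux.betaToPartition_shift, SymbolAux.betaToPartition_shift]
  have hDs : ∀ (d : ℕ) (Λ : LSymbol), symbolDefect (dShift d Λ) = symbolDefect Λ := by
    intro d Λ
    simp only [symbolDefect, dShift]
    rw [SymbolAux.card_shiftSet, SymbolAux.card_shiftSet]
    push_cast
    ring
  have hsize : ∀ (d : ℕ) (Λ : LSymbol), UpsilonSize (dShift d Λ) = UpsilonSize Λ := by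
    intro d Λ
    unfold UpsilonSize
    rw [hUs]
  refine ⟨?_, SymbolAux.rank_eq, ?_⟩
  · intro Λ Λ' h
    induction h with
    | rel x y hxy =>
      obtain ⟨d, rfl⟩ := hxy
      refine ⟨?_, (hDs d x).symm, (hUs d x).symm⟩
      rw [SymbolAux.rank_eq, SymbolAux.rank_eq, hsize, hDs]
    | refl x => exact ⟨rfl, rfl, rfl⟩
    | symm x y _ ih => exact ⟨ih.1.symm, ih.2.1.symm, ih.2.2.symm⟩
    | trans x y z _ _ ih1 ih2 =>
      exact ⟨ih1.1.trans ih2.1, ih1.2.1.trans ih2.2.1, ih1.2.2.trans ih2.2.2⟩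
  · intro δ m
    constructor
    · intro p₁ p₂ hp₁ hp₂ hsum
      set n₁ := Multiset.card p₁ + Multiset.card p₂ + δ.toNat with hn₁
      set n₂ := Multiset.card p₁ + Multiset.card p₂ + (-δ).toNat with hn₂
      set Λ : LSymbol := (SymbolAux.buildFinset p₁ n₁, SymbolAux.buildFinset p₂ n₂) with hΛ
      have hc1 : (SymbolAux.buildFinset p₁ n₁).card = n₁ :=
        SymbolAux.card_buildFinset _ _ (by omega)
      have hc2 : (SymbolAux.buildFinset p₂ n₂).card = n₂ :=
        SymbolAux.card_buildFinset _ _ (by omega)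
      have hU : Upsilon Λ = (p₁, p₂) := by
        simp only [Upsilon, hΛ]
        rw [SymbolAux.betaToPartition_buildFinset p₁ n₁ (fun x hx => (hp₁ x hx).ne'),
          SymbolAux.betaToPartition_buildFinset p₂ n₂ (fun x hx => (hp₂ x hx).ne')]
      have hD : symbolDefect Λ = δ := by
        simp only [symbolDefect, hΛ]
        rw [hc1, hc2, hn₁, hn₂]
        omega
      refine ⟨Λ, hD, ?_, hU⟩
      rw [SymbolAux.rank_eq, hD]
      congr 1
      have : UpsilonSize Λ = p₁.sum + p₂.sum := by
        unfold UpsilonSize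
        rw [hU]
      rw [this, hsum]
    · intro Λ Λ' hd hd' _ _ hU
      exact SymbolAux.equiv_of_eq Λ Λ' (hd.trans hd'.symm) hU


end
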